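/- Consider the R-linear maps g : R³ → R defined by g(a,b,c) = V²·a + Q·V·b + Q²·c, and A : R³ → R³ defined by A(x,y,z) = (Q·x, V·x + Q·y, V·y + Q·z). Then ker(g) = range(A). -/

import Mathlib

open Polynomial CategoryTheory

noncomputable section

/-- The field `F = ℤ/2ℤ`. -/
abbrev Fld := ZMod 2

/-- The polynomial ring `F[[V]][Q]` (polynomials in `Q` over the power series ring `F[[V]]`). -/
abbrev Rpoly := Polynomial (PowerSeries Fld)

/-- The ring `R = F[[V]][Q]/(Q³)`. -/
abbrev Rring := Rpoly ⧸ Ideal.span ({(X : Rpoly) ^ 3} : Set Rpoly)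

/-- `Q`, the image in `R` of the polynomial variable. -/
def Qe : Rring := Ideal.Quotient.mk (Ideal.span ({(X : Rpoly) ^ 3} : Set Rpoly)) (X : Rpoly)

/-- `V`, the image in `R` of the power series variable. -/
def Ve : Rring := Ideal.Quotient.mk (Ideal.span ({(X : Rpoly) ^ 3} : Set Rpoly)) (C PowerSeries.X)
/-- `g(a,b,c) = V²·a + Q·V·b + Q²·c`. -/
def g3 : (Rring × Rring × Rring) →ₗ[Rring] Rring where
  toFun p := Ve ^ 2 * p.1 + Qe * Ve * p.2.1 + Qe ^ 2 * p.2.2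
  map_add' p q := by simp; ring
  map_smul' r p := by simp [smul_eq_mul]; ring

/-- `A(x,y,z) = (Q·x, V·x + Q·y, V·y + Q·z)`. -/
def A3 : (Rring × Rring × Rring) →ₗ[Rring] (Rring × Rring × Rring) where
  toFun p := (Qe * p.1, Ve * p.1 + Qe * p.2.1, Ve * p.2.1 + Qe * p.2.2)
  map_add' p q := by
    simp only [Prod.ext_iff, Prod.fst_add, Prod.snd_add, Prod.mk_add_mk]
    refine ⟨by ring, by ring, by ring⟩
  map_smul' r p := by
    simp only [Prod.ext_iff, Prod.smul_fst, Prod.smul_snd, Prod.smul_mk, smul_eq_mul,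
      RingHom.id_apply]
    refine ⟨by ring, by ring, by ring⟩


lemma two_ps : (2 : PowerSeries Fld) = 0 := by
  rw [show (2:PowerSeries Fld) = PowerSeries.C (2:Fld) from (map_ofNat _ 2).symm,
    show (2:Fld) = 0 from rfl, map_zero]

lemma neg_ps (u : PowerSeries Fld) : -u = u := by
  linear_combination (-u) * two_ps

lemma two_R : (2 : Rring) = 0 := by
  have h := map_ofNat ((Ideal.Quotient.mk (Ideal.span ({(X : Rpoly) ^ 3} : Set Rpoly))).comp
    (C : PowerSeries Fld →+* Rpoly)) 2
  rw [← h]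
  simp [two_ps]

lemma Q3 : Qe ^ 3 = 0 := by
  rw [Qe, ← map_pow, Ideal.Quotient.eq_zero_iff_mem]
  exact Ideal.mem_span_singleton_self _

lemma key (a b c : Rring)
    (hv : Ve ^ 2 * a + Qe * Ve * b + Qe ^ 2 * c = 0) :
    ∃ x y z : Rring, Qe * x = a ∧ Ve * x + Qe * y = b ∧ Ve * y + Qe * z = c := by
  set I := Ideal.span ({(X : Rpoly) ^ 3} : Set Rpoly) with hI
  set mk := Ideal.Quotient.mk I with hmk
  obtain ⟨pa, rfl⟩ := Ideal.Quotient.mk_surjective a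
  obtain ⟨pb, rfl⟩ := Ideal.Quotient.mk_surjective b
  obtain ⟨pc, rfl⟩ := Ideal.Quotient.mk_surjective c
  set W : PowerSeries Fld := PowerSeries.X with hW
  have hW0 : W ≠ 0 := PowerSeries.X_ne_zero
  have hP : mk (C (W^2) * pa + C W * (X * pb) + X^2 * pc) = 0 := by
    rw [← hv]
    simp only [map_add, map_mul, map_pow, Qe, Ve, ← hmk, ← hI]
    ring
  have hdvd : (X : Rpoly)^3 ∣ C (W^2) * pa + C W * (X * pb) + X^2 * pc := by
    rw [← Ideal.mem_span_singleton, ← hI, ← Ideal.Quotient.eq_zero_iff_mem]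
    exact hP
  have hco := Polynomial.X_pow_dvd_iff.mp hdvd
  have h0 := hco 0 (by norm_num)
  have h1 := hco 1 (by norm_num)
  have h2 := hco 2 (by norm_num)
  simp only [coeff_add, coeff_C_mul, pow_two, mul_assoc] at h0 h1 h2
  have e1 : ∀ p : Rpoly, (X*p).coeff 1 = p.coeff 0 := fun p => coeff_X_mul p 0
  have e2 : ∀ p : Rpoly, (X*p).coeff 2 = p.coeff 1 := fun p => coeff_X_mul p 1
  simp only [e1, e2, mul_coeff_zero, coeff_X_zero, zero_mul, mul_zero, add_zero,
    zero_add] at h0 h1 h2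
  -- h0 : W * (W * pa.coeff 0) = 0
  have hpa0 : pa.coeff 0 = 0 := by
    have h0' := (mul_eq_zero.mp h0).resolve_left hW0
    exact (mul_eq_zero.mp h0').resolve_left hW0
  obtain ⟨x, hx⟩ := Polynomial.X_dvd_iff.mpr hpa0
  have hx1 : pa.coeff 1 = x.coeff 0 := by rw [hx]; exact e1 x
  have hx2 : pa.coeff 2 = x.coeff 1 := by rw [hx]; exact e2 x
  rw [hx1] at h1
  -- h1 : W * (W * x.coeff 0) + W * pb.coeff 0 = 0
  have hpb0 : pb.coeff 0 = W * x.coeff 0 := by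
    have hc : W * (W * x.coeff 0 + pb.coeff 0) = 0 := by linear_combination h1
    have := (mul_eq_zero.mp hc).resolve_left hW0
    have hn0 := neg_ps (W * x.coeff 0)
    linear_combination this + hn0
  obtain ⟨y, hy⟩ := Polynomial.X_dvd_iff.mpr
    (show (pb - C W * x).coeff 0 = 0 by simp [hpb0])
  have hpb : pb = C W * x + X * y := by linear_combination hy
  have hpb1 : pb.coeff 1 = W * x.coeff 1 + y.coeff 0 := by
    rw [hpb]; simp [e1, coeff_C_mul]
  rw [hx2, hpb1] at h2
  have hpc0 : pc.coeff 0 = W * y.coeff 0 := by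
    have hn := neg_ps (W * (W * x.coeff 1))
    have hn2 := neg_ps (W * y.coeff 0)
    linear_combination h2 + hn + hn2
  obtain ⟨z, hz⟩ := Polynomial.X_dvd_iff.mpr
    (show (pc - C W * y).coeff 0 = 0 by simp [hpc0])
  have hpc : pc = C W * y + X * z := by linear_combination hz
  refine ⟨mk x, mk y, mk z, ?_, ?_, ?_⟩
  · rw [Qe, ← hmk, ← map_mul, ← hx]
  · rw [Qe, Ve, ← hmk, ← map_mul, ← map_mul, ← map_add, ← hpb]
  · rw [Qe, Ve, ← hmk, ← map_mul, ← map_mul, ← map_add, ← hpc]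

/-- `ker g = range A`. -/
theorem stmt11 : LinearMap.ker g3 = LinearMap.range A3 := by
  ext v
  obtain ⟨a, b, c⟩ := v
  simp only [LinearMap.mem_ker, LinearMap.mem_range, g3, A3, LinearMap.coe_mk, AddHom.coe_mk,
    Prod.mk.injEq, Prod.exists]
  constructor
  · intro hv
    obtain ⟨x, y, z, h1, h2, h3⟩ := key a b c hv
    exact ⟨x, y, z, h1, h2, h3⟩
  · rintro ⟨x, y, z, rfl, rfl, rfl⟩
    linear_combination (Qe*Ve^2*x + Qe^2*Ve*y) * two_R + z * Q3
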